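/- arXiv:1007.1852 — 3 statements merged into one kernel-verified Lean document; each statement's English description precedes it below -/
import Mathlib

section
/- (Abstract Sampling Theorem) Let H be a separable Hilbert space, S, W ⊂ H closed subspaces with W ∩ S^⊥ = {0}, and {s_k}, {w_k} Riesz bases for S, W with constants A, B and C, D respectively. Let f = Σ β_k w_k with β ∈ l²(ℕ), and let U = (⟨s_i, w_j⟩)_{i,j}. Then for each n there exists M such that for all m ≥ M the system (P_n U* P_m U P_n)β̃ = P_n U* P_m η_f (where η_f = (⟨s_k, f⟩)_k) has a unique solution β̃ ∈ P_n l²(ℕ), and the reconstruction f̃ = Σ_{k=1}^n β̃_k w_k satisfies ‖f − f̃‖ ≤ √B (1 + K_{n,m}) ‖P_n^⊥ β‖, where K_{n,m} = ‖(P_n U* P_m U P_n |_{P_n l²(ℕ)})^{-1} P_n U* P_m U P_n^⊥‖. -/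
noncomputable section
open MeasureTheory ContinuousLinearMap Filter Topology
open scoped InnerProductSpace

/-- The sequence space `ℓ²(ℕ)`. -/
abbrev H2 : Type := lp (fun _ : ℕ => ℂ) 2

/-- The span of the first `n` canonical basis vectors `e_0, …, e_{n-1}` of `ℓ²(ℕ)`. -/
def Ksub (n : ℕ) : Submodule ℂ H2 :=
  Submodule.span ℂ ((fun i => lp.single 2 i (1:ℂ)) '' (Set.Iio n))

instance (n : ℕ) : FiniteDimensional ℂ (Ksub n) :=
  FiniteDimensional.span_of_finite ℂ ((Set.finite_Iio n).image _)

/-- The coordinate projection `P_n` onto the span of the first `n` basis vectors. -/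
def Pn (n : ℕ) : H2 →L[ℂ] H2 :=
  (Ksub n).subtypeL.comp (Ksub n).orthogonalProjectionOnto

/-- The compression of an operator `T` to the range of `P_n`, as an operator on `Ksub n`. -/
def compK (n : ℕ) (T : H2 →L[ℂ] H2) : Ksub n →L[ℂ] Ksub n :=
  (Ksub n).orthogonalProjectionOnto.comp (T.comp (Ksub n).subtypeL)

/-- The compression of `U* P_m U` to the range of `P_n`, i.e. `P_n U* P_m U P_n` viewed
as an operator on `Ksub n`. -/
def compKm (n m : ℕ) (U : H2 →L[ℂ] H2) : Ksub n →L[ℂ] Ksub n :=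
  compK n ((ContinuousLinearMap.adjoint U).comp ((Pn m).comp U))

/-- The uneven finite section `P_n U* P_m U P_n` as an operator on all of `ℓ²(ℕ)`. -/
def Sec (n m : ℕ) (U : H2 →L[ℂ] H2) : H2 →L[ℂ] H2 :=
  (Pn n).comp ((ContinuousLinearMap.adjoint U).comp ((Pn m).comp (U.comp (Pn n))))

/-- The section `P_n U* U P_n` as an operator on all of `ℓ²(ℕ)`. -/
def SecInf (n : ℕ) (U : H2 →L[ℂ] H2) : H2 →L[ℂ] H2 :=
  (Pn n).comp ((ContinuousLinearMap.adjoint U).comp (U.comp (Pn n)))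

/-- `P_n U* P_m U P_n^⊥` as an operator on `ℓ²(ℕ)`. -/
def SecPerp (n m : ℕ) (U : H2 →L[ℂ] H2) : H2 →L[ℂ] H2 :=
  (Pn n).comp ((ContinuousLinearMap.adjoint U).comp ((Pn m).comp
    (U.comp (ContinuousLinearMap.id ℂ H2 - Pn n))))

/-- The operator `(P_n U* P_m U P_n|_{P_n ℓ²})⁻¹ P_n U* P_m U P_n^⊥`, where `Ainv` is the
inverse of the finite section on `Ksub n`. -/
def Kop (n m : ℕ) (U : H2 →L[ℂ] H2) (Ainv : Ksub n →L[ℂ] Ksub n) : H2 →L[ℂ] H2 :=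
  (Ksub n).subtypeL.comp (Ainv.comp ((Ksub n).orthogonalProjectionOnto.comp
    ((ContinuousLinearMap.adjoint U).comp ((Pn m).comp
      (U.comp (ContinuousLinearMap.id ℂ H2 - Pn n))))))
/-- `lp.single` as a scalar multiple of the basis vector. -/
lemma single_eq_smul' (i : ℕ) (a : ℂ) : (lp.single 2 i a : H2) = a • lp.single 2 i (1:ℂ) := by
  ext j
  by_cases h : j = i
  · subst h; simp [lp.single_apply_self, lp.coeFn_smul]
  · simp [lp.single_apply_ne 2 i _ h, lp.coeFn_smul, Pi.smul_apply, Pi.single_apply, h]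

/-- Representation of elements of `Ksub n` in terms of the canonical basis vectors. -/
lemma Ksub_repr' (n : ℕ) : ∀ x ∈ Ksub n,
    x = ∑ i ∈ Finset.range n, (x i) • (lp.single 2 i (1:ℂ) : H2) := by
  intro x hx
  induction hx using Submodule.span_induction with
  | mem y hy =>
      obtain ⟨j, hj, rfl⟩ := hy
      rw [Finset.sum_eq_single j]
      · simp [lp.single_apply_self]
      · intro i _ hij
        rw [lp.single_apply_ne 2 j _ hij, zero_smul]
      · intro hjn
        exact absurd (Finset.mem_range.mpr hj) hjn
  | zero => simp
  | add a b _ _ iha ihb =>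
      calc a + b = (∑ i ∈ Finset.range n, (a i) • (lp.single 2 i (1:ℂ) : H2))
          + ∑ i ∈ Finset.range n, (b i) • (lp.single 2 i (1:ℂ) : H2) := by rw [← iha, ← ihb]
        _ = ∑ i ∈ Finset.range n, ((a + b) i) • (lp.single 2 i (1:ℂ) : H2) := by
            rw [← Finset.sum_add_distrib]
            refine Finset.sum_congr rfl fun i _ => ?_
            rw [lp.coeFn_add, Pi.add_apply, add_smul]
  | smul r a _ iha =>
      calc r • a = r • ∑ i ∈ Finset.range n, (a i) • (lp.single 2 i (1:ℂ) : H2) := by rw [← iha]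
        _ = ∑ i ∈ Finset.range n, ((r • a) i) • (lp.single 2 i (1:ℂ) : H2) := by
            rw [Finset.smul_sum]
            refine Finset.sum_congr rfl fun i _ => ?_
            rw [lp.coeFn_smul, Pi.smul_apply, smul_smul]
            rfl

lemma truncation_mem' (m : ℕ) (y : H2) :
    (∑ i ∈ Finset.range m, lp.single 2 i (y i) : H2) ∈ Ksub m := by
  refine Submodule.sum_mem _ fun i hi => ?_
  rw [single_eq_smul']
  exact Submodule.smul_mem _ _ (Submodule.subset_span ⟨i, Finset.mem_range.mp hi, rfl⟩)

lemma norm_sub_Pn_le' (m : ℕ) (y z : H2) (hz : z ∈ Ksub m) : ‖y - Pn m y‖ ≤ ‖y - z‖ := by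
  have h : Pn m y = (Ksub m).starProjection y := rfl
  rw [h, Submodule.starProjection_minimal]
  exact ciInf_le ⟨0, by rintro b ⟨x, rfl⟩; exact norm_nonneg _⟩ (⟨z, hz⟩ : Ksub m)

lemma tendsto_Pn' (y : H2) : Filter.Tendsto (fun m => ‖y - Pn m y‖) Filter.atTop (𝓝 0) := by
  have hsum : HasSum (fun i : ℕ => lp.single 2 i (y i) : ℕ → H2) y :=
    lp.hasSum_single (by norm_num) y
  have htr : Filter.Tendsto (fun m => ‖y - ∑ i ∈ Finset.range m, lp.single 2 i (y i)‖)
      Filter.atTop (𝓝 0) := by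
    have h1 := hsum.tendsto_sum_nat
    have h2 : Filter.Tendsto (fun m => y - ∑ i ∈ Finset.range m, lp.single 2 i (y i))
        Filter.atTop (𝓝 (y - y)) := tendsto_const_nhds.sub h1
    rw [sub_self] at h2
    simpa using h2.norm
  refine squeeze_zero (fun m => norm_nonneg _) (fun m => ?_) htr
  exact norm_sub_Pn_le' m y _ (truncation_mem' m y)

lemma adj_coord' {H : Type*} [NormedAddCommGroup H] [InnerProductSpace ℂ H] [CompleteSpace H]
    (S : H2 →L[ℂ] H) (s : ℕ → H) (hS : ∀ α : H2, HasSum (fun k => α k • s k) (S α))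
    (g : H) (k : ℕ) : (ContinuousLinearMap.adjoint S g) k = ⟪s k, g⟫_ℂ := by
  have hSe : S (lp.single 2 k (1:ℂ)) = s k := by
    have h1 : HasSum (fun j => ((lp.single 2 k (1:ℂ) : H2) j) • s j) (s k) := by
      convert hasSum_ite_eq k (s k) using 2 with j
      by_cases h : j = k
      · subst h; simp [lp.single_apply_self]
      · simp [lp.single_apply_ne 2 k _ h, h]
    exact ((h1.unique (hS _))).symm
  have h2 : (ContinuousLinearMap.adjoint S g) k
      = ⟪(lp.single 2 k (1:ℂ) : H2), ContinuousLinearMap.adjoint S g⟫_ℂ := by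
    rw [lp.inner_single_left]
    simp
  rw [h2, ContinuousLinearMap.adjoint_inner_right, hSe]

set_option maxHeartbeats 2000000 in
/-- **Abstract Sampling Theorem.** Let `{s_k}`, `{w_k}` be Riesz bases for
closed subspaces `S`, `W` of a separable Hilbert space with `W ∩ S^⊥ = {0}`, let
`f = Σ β_k w_k` with `β ∈ ℓ²(ℕ)`, and let `U = S*W` (the matrix `(⟨s_i, w_j⟩)`).  Then for
each `n` there is `M` such that for all `m ≥ M` the system
`(P_n U* P_m U P_n) β̃ = P_n U* P_m η_f` (with `η_f = S*f = (⟨s_k, f⟩)_k`) has a unique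
solution `β̃` in the range of `P_n`, and the reconstruction `f̃ = Σ_{k<n} β̃_k w_k = W β̃`
satisfies `‖f − f̃‖ ≤ √B (1 + K_{n,m}) ‖P_n^⊥ β‖`, where
`K_{n,m} = ‖(P_n U* P_m U P_n|_{P_n ℓ²})⁻¹ P_n U* P_m U P_n^⊥‖`. -/
theorem abstract_sampling_theorem {H : Type*} [NormedAddCommGroup H]
    [InnerProductSpace ℂ H] [CompleteSpace H]
    (s w : ℕ → H) (A B C D : ℝ) (hA : 0 < A) (hAB : A ≤ B) (hC : 0 < C) (hCD : C ≤ D)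
    (S W : H2 →L[ℂ] H)
    (hS : ∀ α : H2, HasSum (fun k => α k • s k) (S α))
    (hW : ∀ α : H2, HasSum (fun k => α k • w k) (W α))
    (hrw : ∀ α : H2, A * ‖α‖ ^ 2 ≤ ‖W α‖ ^ 2 ∧ ‖W α‖ ^ 2 ≤ B * ‖α‖ ^ 2)
    (hrs : ∀ α : H2, C * ‖α‖ ^ 2 ≤ ‖S α‖ ^ 2 ∧ ‖S α‖ ^ 2 ≤ D * ‖α‖ ^ 2)
    (hWS : ∀ g : H, g ∈ (Submodule.span ℂ (Set.range w)).topologicalClosure →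
      (∀ k, ⟪s k, g⟫_ℂ = 0) → g = 0)
    (β : H2) (f : H) (hf : f = W β) (n : ℕ) :
    ∃ M : ℕ, ∀ m, M ≤ m →
      (∃! βt : H2, βt ∈ Ksub n ∧
        Sec n m ((ContinuousLinearMap.adjoint S).comp W) βt =
          ((Pn n).comp ((ContinuousLinearMap.adjoint
              ((ContinuousLinearMap.adjoint S).comp W)).comp (Pn m)))
            ((ContinuousLinearMap.adjoint S) f)) ∧
      (∀ βt : H2, βt ∈ Ksub n →
        Sec n m ((ContinuousLinearMap.adjoint S).comp W) βt =
          ((Pn n).comp ((ContinuousLinearMap.adjoint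
              ((ContinuousLinearMap.adjoint S).comp W)).comp (Pn m)))
            ((ContinuousLinearMap.adjoint S) f) →
        ∀ Ainv : Ksub n →L[ℂ] Ksub n,
          Ainv.comp (compKm n m ((ContinuousLinearMap.adjoint S).comp W))
            = ContinuousLinearMap.id ℂ (Ksub n) →
          (compKm n m ((ContinuousLinearMap.adjoint S).comp W)).comp Ainv
            = ContinuousLinearMap.id ℂ (Ksub n) →
          ‖f - W βt‖ ≤ Real.sqrt B *
            (1 + ‖Kop n m ((ContinuousLinearMap.adjoint S).comp W) Ainv‖) *
            ‖β - Pn n β‖) := by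
    classical
  set U : H2 →L[ℂ] H2 := (ContinuousLinearMap.adjoint S).comp W with hUdef
  -- U is injective
  have hU0 : ∀ x : H2, U x = 0 → x = 0 := by
    intro x hx
    have hWx : W x = 0 := by
      refine hWS (W x) ?_ ?_
      · rw [← SetLike.mem_coe, Submodule.topologicalClosure_coe]
        refine mem_closure_of_tendsto (hW x) (Filter.Eventually.of_forall fun t => ?_)
        exact Submodule.sum_mem _ fun k _ =>
          Submodule.smul_mem _ _ (Submodule.subset_span ⟨k, rfl⟩)
      · intro k
        have h1 : (U x) k = ⟪s k, W x⟫_ℂ := adj_coord' S s hS (W x) k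
        rw [hx] at h1
        simpa using h1.symm
    have h2 := (hrw x).1
    rw [hWx] at h2
    norm_num at h2
    rw [pow_two] at h2
    have hx0 : ‖x‖ = 0 := by
      by_contra hne
      have hposx : 0 < ‖x‖ := lt_of_le_of_ne (norm_nonneg x) (Ne.symm hne)
      nlinarith [mul_pos hA (mul_pos hposx hposx)]
    simpa using norm_eq_zero.mp hx0
  -- antilipschitz constant for U restricted to Ksub n
  set T : Ksub n →L[ℂ] H2 := U.comp (Ksub n).subtypeL with hTdef
  have hTker : LinearMap.ker (T : Ksub n →ₗ[ℂ] H2) = ⊥ := by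
    rw [LinearMap.ker_eq_bot]
    intro x₁ x₂ h12
    have h3 : U ((x₁ : H2) - (x₂ : H2)) = 0 := by
      rw [map_sub, sub_eq_zero]
      exact h12
    exact Subtype.ext (sub_eq_zero.mp (hU0 _ h3))
  obtain ⟨K, hK, hant⟩ := LinearMap.exists_antilipschitzWith _ hTker
  have hKpos : (0:ℝ) < (K : ℝ) := by exact_mod_cast hK
  have hlow : ∀ x : Ksub n, ‖(x : H2)‖ ≤ (K : ℝ) * ‖U (x : H2)‖ := by
    intro x
    have h4 := hant.le_mul_dist x 0
    rw [dist_zero_right, map_zero, dist_zero_right] at h4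
    exact h4
  -- the deviation of the finite sections
  set dlt : ℕ → ℝ := fun m => ∑ i ∈ Finset.range n,
    ‖U (lp.single 2 i (1:ℂ)) - Pn m (U (lp.single 2 i (1:ℂ)))‖ with hdltdef
  have hdlt0 : ∀ m, 0 ≤ dlt m := fun m => Finset.sum_nonneg fun i _ => norm_nonneg _
  have hbound : ∀ (m : ℕ) (x : H2), x ∈ Ksub n → ‖U x - Pn m (U x)‖ ≤ dlt m * ‖x‖ := by
    intro m x hx
    have key : U x - Pn m (U x) = ∑ i ∈ Finset.range n,
        (x i) • (U (lp.single 2 i (1:ℂ)) - Pn m (U (lp.single 2 i (1:ℂ)))) := by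
      conv_lhs => rw [Ksub_repr' n x hx]
      simp only [map_sum, _root_.map_smul, smul_sub, Finset.sum_sub_distrib]
    rw [key]
    refine (norm_sum_le _ _).trans ?_
    have h4 : ∀ i ∈ Finset.range n,
        ‖(x i) • (U (lp.single 2 i (1:ℂ)) - Pn m (U (lp.single 2 i (1:ℂ))))‖
        ≤ ‖x‖ * ‖U (lp.single 2 i (1:ℂ)) - Pn m (U (lp.single 2 i (1:ℂ)))‖ := by
      intro i _
      rw [norm_smul]
      exact mul_le_mul_of_nonneg_right (lp.norm_apply_le_norm (by norm_num) x i) (norm_nonneg _)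
    refine (Finset.sum_le_sum h4).trans ?_
    rw [← Finset.mul_sum]
    exact le_of_eq (mul_comm _ _)
  have hdlt_tend : Filter.Tendsto dlt Filter.atTop (𝓝 0) := by
    have h5 : Filter.Tendsto (fun m => ∑ i ∈ Finset.range n,
        ‖U (lp.single 2 i (1:ℂ)) - Pn m (U (lp.single 2 i (1:ℂ)))‖) Filter.atTop
        (𝓝 (∑ i ∈ Finset.range n, (0:ℝ))) :=
      tendsto_finset_sum _ fun i _ => tendsto_Pn' (U (lp.single 2 i (1:ℂ)))
    rw [Finset.sum_const_zero] at h5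
    exact h5
  have hpos : (0:ℝ) < ((2:ℝ) * (K:ℝ))⁻¹ := by positivity
  obtain ⟨M, hM⟩ := Filter.eventually_atTop.mp (hdlt_tend.eventually_lt_const hpos)
  refine ⟨M, fun m hm => ?_⟩
  have hdm : dlt m < ((2:ℝ) * (K:ℝ))⁻¹ := hM m hm
  -- injectivity of the compressed section
  have hinj : ∀ x : Ksub n, compKm n m U x = 0 → x = 0 := by
    intro x hx0
    by_cases hxz : (x : H2) = 0
    · exact Subtype.ext hxz
    have hxpos : 0 < ‖(x : H2)‖ := norm_pos_iff.mpr hxz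
    set v : H2 := (ContinuousLinearMap.adjoint U) (Pn m (U (x : H2))) with hvdef
    have hproj : (((Ksub n).orthogonalProjectionOnto v : Ksub n) : H2) = 0 := by
      have h6 : (Ksub n).orthogonalProjectionOnto v = compKm n m U x := rfl
      rw [h6, hx0]
      rfl
    have hvx : ⟪v, (x : H2)⟫_ℂ = 0 := by
      have h6 : ⟪v - ((Ksub n).orthogonalProjectionOnto v : H2), (x : H2)⟫_ℂ = 0 :=
        Submodule.starProjection_inner_eq_zero (K := Ksub n) v (x : H2) x.2
      rwa [hproj, sub_zero] at h6
    have hvx2 : ⟪Pn m (U (x:H2)), U (x:H2)⟫_ℂ = 0 := by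
      rw [hvdef] at hvx
      rw [ContinuousLinearMap.adjoint_inner_left] at hvx
      exact hvx
    have hPm0 : Pn m (U (x:H2)) = 0 := by
      set y := U (x:H2) with hy
      have hmem : Pn m y ∈ Ksub m := ((Ksub m).orthogonalProjectionOnto y).2
      have hperp : ⟪y - Pn m y, Pn m y⟫_ℂ = 0 :=
        Submodule.starProjection_inner_eq_zero (K := Ksub m) y (Pn m y) hmem
      have h8 : ⟪Pn m y, y - Pn m y⟫_ℂ = 0 := by
        rw [← inner_conj_symm, hperp, map_zero]
      have h9 : ⟪Pn m y, y⟫_ℂ = ⟪Pn m y, Pn m y⟫_ℂ + ⟪Pn m y, y - Pn m y⟫_ℂ := by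
        rw [← inner_add_right]
        congr 1
        abel
      rw [hvx2, h8, add_zero] at h9
      exact inner_self_eq_zero.mp h9.symm
    have h11 : ‖U (x:H2)‖ ≤ dlt m * ‖(x:H2)‖ := by
      have h12 := hbound m (x:H2) x.2
      rwa [hPm0, sub_zero] at h12
    have h12 := hlow x
    have h13 : (K:ℝ) * dlt m < 1/2 := by
      calc (K:ℝ) * dlt m < (K:ℝ) * ((2:ℝ) * (K:ℝ))⁻¹ :=
            mul_lt_mul_of_pos_left hdm hKpos
        _ = 1/2 := by
            field_simp
    nlinarith [hdlt0 m]
  have hkerinj : Function.Injective ⇑(compKm n m U) := by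
    intro a b hab
    have h6 : compKm n m U (a - b) = 0 := by
      rw [map_sub, sub_eq_zero]
      exact hab
    exact sub_eq_zero.mp (hinj _ h6)
  have hker : LinearMap.ker (compKm n m U : Ksub n →ₗ[ℂ] Ksub n) = ⊥ := (LinearMap.ker_eq_bot (f := (compKm n m U : Ksub n →ₗ[ℂ] Ksub n))).mpr hkerinj
  have hsurj : LinearMap.range (compKm n m U : Ksub n →ₗ[ℂ] Ksub n) = ⊤ :=
    LinearMap.range_eq_top.mpr ((LinearMap.injective_iff_surjective
      (f := ((compKm n m U : Ksub n →L[ℂ] Ksub n) : Ksub n →ₗ[ℂ] Ksub n))).mp hkerinj)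
  set e := ContinuousLinearEquiv.ofBijective (compKm n m U) hker hsurj with hedef
  have hecoe : ∀ x : Ksub n, e x = compKm n m U x := by
    intro x
    rw [hedef, ContinuousLinearEquiv.coeFn_ofBijective]
  have hSf : (ContinuousLinearMap.adjoint S) f = U β := by
    rw [hf, hUdef]
    rfl
  set rhsK : Ksub n := (Ksub n).orthogonalProjectionOnto
    ((ContinuousLinearMap.adjoint U) (Pn m (U β))) with hrhsdef
  have hRHS : ((Pn n).comp ((ContinuousLinearMap.adjoint U).comp (Pn m)))
      ((ContinuousLinearMap.adjoint S) f) = ((rhsK : Ksub n) : H2) := by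
    rw [hSf]
    rfl
  have hEq : ∀ (bt : H2) (hbt : bt ∈ Ksub n),
      (Sec n m U bt = ((Pn n).comp ((ContinuousLinearMap.adjoint U).comp (Pn m)))
        ((ContinuousLinearMap.adjoint S) f))
      ↔ compKm n m U ⟨bt, hbt⟩ = rhsK := by
    intro bt hbt
    have hPnbt : Pn n bt = bt := (Submodule.starProjection_eq_self_iff (K := Ksub n)).mpr hbt
    have hLHS : Sec n m U bt = ((compKm n m U ⟨bt, hbt⟩ : Ksub n) : H2) := by
      show Pn n ((ContinuousLinearMap.adjoint U) (Pn m (U (Pn n bt)))) = _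
      rw [hPnbt]
      rfl
    rw [hRHS, hLHS]
    constructor
    · intro h
      exact Subtype.coe_injective h
    · intro h
      rw [h]
  constructor
  · -- existence and uniqueness
    refine ⟨((e.symm rhsK : Ksub n) : H2), ⟨(e.symm rhsK).2, ?_⟩, ?_⟩
    · rw [hEq _ (e.symm rhsK).2]
      have h6 : (⟨((e.symm rhsK : Ksub n) : H2), (e.symm rhsK).2⟩ : Ksub n) = e.symm rhsK := rfl
      rw [h6, ← hecoe]
      exact e.apply_symm_apply rhsK
    · rintro bt' ⟨hmem', heq'⟩
      have h6 := (hEq bt' hmem').mp heq'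
      have h7 : (⟨bt', hmem'⟩ : Ksub n) = e.symm rhsK := by
        apply e.injective
        rw [e.apply_symm_apply, hecoe]
        exact h6
      exact congrArg Subtype.val h7
  · -- error bound
    intro bt hmem heq Ainv hA1 _hA2
    set y : Ksub n := ⟨bt, hmem⟩ with hy
    have h1 : compKm n m U y = rhsK := (hEq bt hmem).mp heq
    set z : Ksub n := (Ksub n).orthogonalProjectionOnto β with hz
    have hPnβ : Pn n β = (z : H2) := rfl
    have h2 : compKm n m U z = (Ksub n).orthogonalProjectionOnto
        ((ContinuousLinearMap.adjoint U) (Pn m (U (Pn n β)))) := by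
      rw [hPnβ]
      rfl
    have h3 : compKm n m U (y - z) = (Ksub n).orthogonalProjectionOnto
        ((ContinuousLinearMap.adjoint U) (Pn m (U (β - Pn n β)))) := by
      rw [map_sub, h1, h2, hrhsdef]
      simp only [← map_sub]
    have h4 : y - z = Ainv ((Ksub n).orthogonalProjectionOnto
        ((ContinuousLinearMap.adjoint U) (Pn m (U (β - Pn n β))))) := by
      rw [← h3]
      have h5 : Ainv (compKm n m U (y - z)) = y - z := by
        have h6 := congrFun (congrArg DFunLike.coe hA1) (y - z)
        simpa using h6
      exact h5.symm
    have hPP : Pn n (Pn n β) = Pn n β :=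
      (Submodule.starProjection_eq_self_iff (K := Ksub n)).mpr ((Ksub n).orthogonalProjectionOnto β).2
    have hid : (ContinuousLinearMap.id ℂ H2 - Pn n) (β - Pn n β) = β - Pn n β := by
      simp only [ContinuousLinearMap.sub_apply, ContinuousLinearMap.id_apply, map_sub, hPP]
      abel
    have hKop : Kop n m U Ainv (β - Pn n β) = bt - Pn n β := by
      show ((Ainv ((Ksub n).orthogonalProjectionOnto ((ContinuousLinearMap.adjoint U)
        (Pn m (U ((ContinuousLinearMap.id ℂ H2 - Pn n) (β - Pn n β)))))) : Ksub n) : H2)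
        = bt - Pn n β
      rw [hid, ← h4]
      rw [hPnβ]
      simp [hy]
    have hKnorm : ‖bt - Pn n β‖ ≤ ‖Kop n m U Ainv‖ * ‖β - Pn n β‖ := by
      rw [← hKop]
      exact (Kop n m U Ainv).le_opNorm _
    have hB0 : (0:ℝ) ≤ B := le_of_lt (lt_of_lt_of_le hA hAB)
    have hWle : ∀ α : H2, ‖W α‖ ≤ Real.sqrt B * ‖α‖ := by
      intro α
      have h6 := (hrw α).2
      have h7 : ‖W α‖ = Real.sqrt (‖W α‖^2) := (Real.sqrt_sq (norm_nonneg _)).symm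
      rw [h7]
      calc Real.sqrt (‖W α‖^2) ≤ Real.sqrt (B * ‖α‖^2) := Real.sqrt_le_sqrt h6
        _ = Real.sqrt B * ‖α‖ := by
          rw [Real.sqrt_mul hB0, Real.sqrt_sq (norm_nonneg _)]
    have hfW : f - W bt = W (β - bt) := by
      rw [hf, ← map_sub]
    have htri : ‖β - bt‖ ≤ ‖β - Pn n β‖ + ‖bt - Pn n β‖ := by
      have h6 : β - bt = (β - Pn n β) - (bt - Pn n β) := by abel
      rw [h6]
      exact norm_sub_le _ _
    have hs0 : (0:ℝ) ≤ Real.sqrt B := Real.sqrt_nonneg _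
    rw [hfW]
    calc ‖W (β - bt)‖ ≤ Real.sqrt B * ‖β - bt‖ := hWle _
      _ ≤ Real.sqrt B * (‖β - Pn n β‖ + ‖bt - Pn n β‖) :=
          mul_le_mul_of_nonneg_left htri hs0
      _ ≤ Real.sqrt B * (‖β - Pn n β‖ + ‖Kop n m U Ainv‖ * ‖β - Pn n β‖) := by
          apply mul_le_mul_of_nonneg_left _ hs0
          linarith
      _ = Real.sqrt B * (1 + ‖Kop n m U Ainv‖) * ‖β - Pn n β‖ := by ring
end
end

section
/- Let U be a bounded operator on l²(ℕ) with U*U = cI for some c > 0. Then for all n, m ∈ ℕ, ‖P_n U* P_m U P_n^⊥‖² ≤ ‖U‖² · ‖P_n U* P_m U P_n − P_n U* U P_n‖. -/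
noncomputable section
open MeasureTheory ContinuousLinearMap Filter Topology
open scoped InnerProductSpace

lemma Pn_idem (n : ℕ) : (Pn n).comp (Pn n) = Pn n := by
  ext x
  simp [Pn, Submodule.orthogonalProjectionOnto_mem_subspace_eq_self,
    Submodule.starProjection_eq_self_iff.mpr (Submodule.starProjection_apply_mem _ x)]

lemma Pn_sa (n : ℕ) : IsSelfAdjoint (Pn n) := isSelfAdjoint_starProjection (Ksub n)

lemma Pn_norm_le (n : ℕ) : ‖Pn n‖ ≤ 1 := by
  have h : ‖(Pn n).comp (Pn n)‖ = ‖Pn n‖ * ‖Pn n‖ := by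
    nth_rw 1 [← (Pn_sa n).adjoint_eq]
    exact ContinuousLinearMap.norm_adjoint_comp_self _
  rw [Pn_idem] at h
  nlinarith [norm_nonneg (Pn n)]

lemma Pn_star (n : ℕ) : star (Pn n) = Pn n := (Pn_sa n).star_eq

lemma Pn_one_sub_norm_le (n : ℕ) : ‖(1 : H2 →L[ℂ] H2) - Pn n‖ ≤ 1 := by
  set T : H2 →L[ℂ] H2 := 1 - Pn n with hT
  have hstar : star T = T := by rw [hT, star_sub, star_one, Pn_star]
  have hTT : T * T = T := by
    have hP : Pn n * Pn n = Pn n := Pn_idem n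
    simp only [hT, mul_sub, sub_mul, one_mul, mul_one, hP]
    abel
  have h : ‖ContinuousLinearMap.adjoint T ∘L T‖ = ‖T‖ * ‖T‖ :=
    ContinuousLinearMap.norm_adjoint_comp_self T
  rw [← ContinuousLinearMap.star_eq_adjoint, hstar, ← ContinuousLinearMap.mul_def, hTT] at h
  nlinarith [norm_nonneg T]

set_option maxHeartbeats 2000000 in
/-- If `U*U = c·I` with `c > 0`, then for all `n, m`,
`‖P_n U* P_m U P_n^⊥‖² ≤ ‖U‖² · ‖P_n U* P_m U P_n − P_n U* U P_n‖`. -/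
theorem SecPerp_sq_le (U : H2 →L[ℂ] H2) (c : ℝ) (hc : 0 < c)
    (hU : (ContinuousLinearMap.adjoint U).comp U
      = ((c : ℂ)) • ContinuousLinearMap.id ℂ H2) :
    ∀ n m : ℕ, ‖SecPerp n m U‖ ^ 2 ≤ ‖U‖ ^ 2 * ‖Sec n m U - SecInf n U‖ := by
  intro n m
  set P : H2 →L[ℂ] H2 := Pn n with hPdef
  set Q : H2 →L[ℂ] H2 := Pn m with hQdef
  set V : H2 →L[ℂ] H2 := ContinuousLinearMap.adjoint U with hVdef
  have hP : P * P = P := Pn_idem n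
  have hQ : Q * Q = Q := Pn_idem m
  have hUc : V * U = (c : ℂ) • 1 := hU
  -- key operators
  set A : H2 →L[ℂ] H2 := (1 - Q) * U * P with hAdef
  set B : H2 →L[ℂ] H2 := (1 - Q) * U * (1 - P) with hBdef
  have hstarA : star A = P * V * (1 - Q) := by
    rw [hAdef, star_mul, star_mul, star_sub, star_one, Pn_star, Pn_star,
      ContinuousLinearMap.star_eq_adjoint]
    noncomm_ring
  -- P V U (1 - P) = 0
  have key : P * V * U * (1 - P) = 0 := by
    calc P * V * U * (1 - P) = P * (V * U) * (1 - P) := by noncomm_ring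
      _ = (c : ℂ) • (P * (1 - P)) := by rw [hUc]; simp [smul_mul_assoc, mul_smul_comm]
      _ = (c : ℂ) • (P - P * P) := by rw [mul_sub, mul_one]
      _ = 0 := by rw [hP, sub_self, smul_zero]
  -- SecPerp = -(star A * B)
  have hSecPerp : SecPerp n m U = -(star A * B) := by
    have expand : P * V * Q * U * (1 - P) + star A * B = P * V * U * (1 - P) := by
      rw [hstarA, hBdef]
      have h1 : (1 - Q) * ((1 - Q) * U * (1 - P)) = (1 - Q) * U * (1 - P) := by
        have : (1 - Q) * (1 - Q) = 1 - Q := by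
          simp only [mul_sub, sub_mul, one_mul, mul_one, hQ]; abel
        rw [← mul_assoc, ← mul_assoc, this]
      calc P * V * Q * U * (1 - P) + P * V * (1 - Q) * ((1 - Q) * U * (1 - P))
          = P * V * Q * U * (1 - P) + P * V * ((1 - Q) * ((1 - Q) * U * (1 - P))) := by noncomm_ring
        _ = P * V * Q * U * (1 - P) + P * V * ((1 - Q) * U * (1 - P)) := by rw [h1]
        _ = P * V * U * (1 - P) := by noncomm_ring
    have hform : SecPerp n m U = P * V * Q * U * (1 - P) := by
      show (Pn n).comp (V.comp (Q.comp (U.comp (ContinuousLinearMap.id ℂ H2 - Pn n))))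
        = P * V * Q * U * (1 - P)
      rw [← ContinuousLinearMap.one_def]
      simp only [← ContinuousLinearMap.mul_def, ← hPdef]
      noncomm_ring
    rw [hform]
    exact eq_neg_of_add_eq_zero_left (by rw [expand, key])
  -- Sec - SecInf = -(star A * A)
  have hSec : Sec n m U - SecInf n U = -(star A * A) := by
    have hform : Sec n m U - SecInf n U = P * V * Q * U * P - P * V * U * P := by
      show (Pn n).comp (V.comp (Q.comp (U.comp (Pn n))))
          - (Pn n).comp (V.comp (U.comp (Pn n))) = _
      simp only [← ContinuousLinearMap.mul_def, ← hPdef]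
      noncomm_ring
    rw [hform, hstarA, hAdef]
    have h1 : (1 - Q) * ((1 - Q) * U * P) = (1 - Q) * U * P := by
      have : (1 - Q) * (1 - Q) = 1 - Q := by
        simp only [mul_sub, sub_mul, one_mul, mul_one, hQ]; abel
      rw [← mul_assoc, ← mul_assoc, this]
    calc P * V * Q * U * P - P * V * U * P
        = -(P * V * ((1 - Q) * ((1 - Q) * U * P))) + (P * V * ((1 - Q) * U * P)
            - (P * V * U * P - P * V * Q * U * P)) := by rw [h1]; noncomm_ring
      _ = -(P * V * (1 - Q) * ((1 - Q) * U * P)) := by noncomm_ring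
  -- norms
  have hnA : ‖star A * A‖ = ‖A‖ * ‖A‖ := by
    have h := ContinuousLinearMap.norm_adjoint_comp_self A
    rwa [← ContinuousLinearMap.star_eq_adjoint, ← ContinuousLinearMap.mul_def] at h
  have hA2 : ‖A‖ * ‖A‖ = ‖Sec n m U - SecInf n U‖ := by
    rw [hSec, norm_neg, hnA]
  have hBnorm : ‖B‖ ≤ ‖U‖ := by
    have hQn : ‖(1 : H2 →L[ℂ] H2) - Q‖ ≤ 1 := Pn_one_sub_norm_le m
    have hPn1 : ‖(1 : H2 →L[ℂ] H2) - P‖ ≤ 1 := Pn_one_sub_norm_le n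
    calc ‖B‖ ≤ ‖(1 - Q) * U‖ * ‖(1 : H2 →L[ℂ] H2) - P‖ := norm_mul_le _ _
      _ ≤ ‖(1 : H2 →L[ℂ] H2) - Q‖ * ‖U‖ * ‖(1 : H2 →L[ℂ] H2) - P‖ :=
          mul_le_mul_of_nonneg_right (norm_mul_le _ _) (norm_nonneg _)
      _ ≤ 1 * ‖U‖ * 1 :=
          mul_le_mul (mul_le_mul hQn le_rfl (norm_nonneg _) zero_le_one) hPn1
            (norm_nonneg _) (by positivity)
      _ = ‖U‖ := by ring
  have hstarAnorm : ‖star A‖ = ‖A‖ := by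
    rw [ContinuousLinearMap.star_eq_adjoint]
    exact LinearIsometryEquiv.norm_map _ A
  have hmain : ‖SecPerp n m U‖ ≤ ‖A‖ * ‖B‖ := by
    rw [hSecPerp, norm_neg]
    calc ‖star A * B‖ ≤ ‖star A‖ * ‖B‖ := norm_mul_le _ _
      _ = ‖A‖ * ‖B‖ := by rw [hstarAnorm]
  have hBnn : (0:ℝ) ≤ ‖B‖ := norm_nonneg _
  have hSn : (0:ℝ) ≤ ‖SecPerp n m U‖ := norm_nonneg _
  have h1 : ‖SecPerp n m U‖ ^ 2 ≤ (‖A‖ * ‖B‖) ^ 2 := by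
    apply pow_le_pow_left₀ hSn hmain
  have h2 : (‖A‖ * ‖B‖) ^ 2 = ‖Sec n m U - SecInf n U‖ * ‖B‖ ^ 2 := by
    rw [mul_pow, sq ‖A‖, hA2]
  have h3 : ‖B‖ ^ 2 ≤ ‖U‖ ^ 2 := pow_le_pow_left₀ hBnn hBnorm 2
  have h4 : ‖Sec n m U - SecInf n U‖ * ‖B‖ ^ 2 ≤ ‖Sec n m U - SecInf n U‖ * ‖U‖ ^ 2 :=
    mul_le_mul_of_nonneg_left h3 (norm_nonneg _)
  calc ‖SecPerp n m U‖ ^ 2 ≤ ‖Sec n m U - SecInf n U‖ * ‖U‖ ^ 2 := by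
        rw [← h2] at h4; linarith
    _ = ‖U‖ ^ 2 * ‖Sec n m U - SecInf n U‖ := by ring
end
end

section
/- With the hypotheses of the abstract sampling theorem, the reconstruction f̃ = W_n(W_n* S_m S_m* W_n)^{-1} W_n* S_m S_m* f satisfies the two-sided bound ‖P_{W_n}^⊥ f‖ ≤ ‖f − f̃‖ ≤ (1 + K_{n,m}) ‖P_{W_n}^⊥ f‖, where K_{n,m} = ‖W_n(W_n* S_m S_m* W_n)^{-1} W_n* S_m S_m* P_{W_n}^⊥‖, provided W_n* S_m S_m* W_n is invertible. -/
noncomputable section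
open MeasureTheory ContinuousLinearMap Filter Topology
open scoped InnerProductSpace

/-- Orthogonal projection of `H` onto the span of finitely many vectors, as an operator
`H →L[ℂ] H`. -/
def projFin {H : Type*} [NormedAddCommGroup H] [InnerProductSpace ℂ H] [CompleteSpace H]
    {n : ℕ} (v : Fin n → H) : H →L[ℂ] H :=
  letI : FiniteDimensional ℂ (Submodule.span ℂ (Set.range v)) :=
    FiniteDimensional.span_of_finite ℂ (Set.finite_range v)
  (Submodule.span ℂ (Set.range v)).subtypeL.comp
    (Submodule.span ℂ (Set.range v)).orthogonalProjectionOnto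

set_option maxHeartbeats 1000000 in
/-- With the hypotheses of the abstract sampling theorem, whenever
`W_n* S_m S_m* W_n` is invertible, the reconstruction
`f̃ = W_n (W_n* S_m S_m* W_n)⁻¹ W_n* S_m S_m* f` satisfies
`‖P_{W_n}^⊥ f‖ ≤ ‖f − f̃‖ ≤ (1 + K_{n,m}) ‖P_{W_n}^⊥ f‖`, where
`K_{n,m} = ‖W_n (W_n* S_m S_m* W_n)⁻¹ W_n* S_m S_m* P_{W_n}^⊥‖`. -/
theorem two_sided_reconstruction_bound {H : Type*} [NormedAddCommGroup H]
    [InnerProductSpace ℂ H] [CompleteSpace H]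
    (s w : ℕ → H) (A B C D : ℝ) (hA : 0 < A) (hAB : A ≤ B) (hC : 0 < C) (hCD : C ≤ D)
    (S W : H2 →L[ℂ] H)
    (hS : ∀ α : H2, HasSum (fun k => α k • s k) (S α))
    (hW : ∀ α : H2, HasSum (fun k => α k • w k) (W α))
    (hrw : ∀ α : H2, A * ‖α‖ ^ 2 ≤ ‖W α‖ ^ 2 ∧ ‖W α‖ ^ 2 ≤ B * ‖α‖ ^ 2)
    (hrs : ∀ α : H2, C * ‖α‖ ^ 2 ≤ ‖S α‖ ^ 2 ∧ ‖S α‖ ^ 2 ≤ D * ‖α‖ ^ 2)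
    (hWS : ∀ g : H, g ∈ (Submodule.span ℂ (Set.range w)).topologicalClosure →
      (∀ k, ⟪s k, g⟫_ℂ = 0) → g = 0)
    (n m : ℕ)
    (Wn : EuclideanSpace ℂ (Fin n) →L[ℂ] H) (Sm : EuclideanSpace ℂ (Fin m) →L[ℂ] H)
    (hWn : ∀ y, Wn y = ∑ k, y k • w (k : ℕ))
    (hSm : ∀ x, Sm x = ∑ k, x k • s (k : ℕ))
    (G : EuclideanSpace ℂ (Fin n) →L[ℂ] EuclideanSpace ℂ (Fin n))
    (hG1 : G.comp ((ContinuousLinearMap.adjoint Wn).comp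
        (Sm.comp ((ContinuousLinearMap.adjoint Sm).comp Wn)))
      = ContinuousLinearMap.id ℂ (EuclideanSpace ℂ (Fin n)))
    (hG2 : ((ContinuousLinearMap.adjoint Wn).comp
        (Sm.comp ((ContinuousLinearMap.adjoint Sm).comp Wn))).comp G
      = ContinuousLinearMap.id ℂ (EuclideanSpace ℂ (Fin n)))
    (f : H) :
    ‖f - projFin (fun k : Fin n => w (k : ℕ)) f‖ ≤
        ‖f - Wn (G ((ContinuousLinearMap.adjoint Wn)
          (Sm ((ContinuousLinearMap.adjoint Sm) f))))‖ ∧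
      ‖f - Wn (G ((ContinuousLinearMap.adjoint Wn)
          (Sm ((ContinuousLinearMap.adjoint Sm) f))))‖ ≤
        (1 + ‖Wn.comp (G.comp ((ContinuousLinearMap.adjoint Wn).comp
            (Sm.comp ((ContinuousLinearMap.adjoint Sm).comp
              (ContinuousLinearMap.id ℂ H - projFin (fun k : Fin n => w (k : ℕ)))))))‖) *
          ‖f - projFin (fun k : Fin n => w (k : ℕ)) f‖ := by
  
  classical
  set v : Fin n → H := fun k : Fin n => w (k : ℕ) with hv
  set V : Submodule ℂ H := Submodule.span ℂ (Set.range v) with hV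
  letI : FiniteDimensional ℂ V := FiniteDimensional.span_of_finite ℂ (Set.finite_range v)
  have hPdef : ∀ g : H, projFin v g = (V.orthogonalProjectionOnto g : H) := fun g => rfl
  -- every Wn y lies in V
  have hrange : ∀ y, Wn y ∈ V := by
    intro y
    rw [hWn]
    exact Submodule.sum_mem _ fun k _ =>
      Submodule.smul_mem _ _ (Submodule.subset_span ⟨k, rfl⟩)
  -- each w k (k < n) is in the range of Wn
  have hsingle : ∀ k : Fin n, Wn (EuclideanSpace.single k 1) = v k := by
    intro k
    rw [hWn]
    rw [Finset.sum_eq_single k]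
    · simp [EuclideanSpace.single_apply, hv]
    · intro j _ hj
      simp [EuclideanSpace.single_apply, hj]
    · simp
  have hVle : ∀ g ∈ V, ∃ y, Wn y = g := by
    intro g hg
    have : V ≤ LinearMap.range (Wn : EuclideanSpace ℂ (Fin n) →ₗ[ℂ] H) := by
      rw [hV, Submodule.span_le]
      rintro _ ⟨k, rfl⟩
      exact ⟨EuclideanSpace.single k 1, hsingle k⟩
    obtain ⟨y, hy⟩ := this hg
    exact ⟨y, hy⟩
  set ft : H := Wn (G ((ContinuousLinearMap.adjoint Wn)
      (Sm ((ContinuousLinearMap.adjoint Sm) f)))) with hft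
  set Pf : H := projFin v f with hPf
  -- lower bound
  have hlow : ‖f - Pf‖ ≤ ‖f - ft‖ := by
    have hmem : ft ∈ V := hrange _
    rw [hPf, hPdef, ← Submodule.starProjection_apply, Submodule.starProjection_minimal]
    exact ciInf_le ⟨0, by rintro _ ⟨x, rfl⟩; positivity⟩ (⟨ft, hmem⟩ : V)
  refine ⟨hlow, ?_⟩
  -- Pf = Wn y for some y
  obtain ⟨y, hy⟩ := hVle Pf (by rw [hPf, hPdef]; exact (V.orthogonalProjectionOnto f).2)
  have hGy : G ((ContinuousLinearMap.adjoint Wn)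
      (Sm ((ContinuousLinearMap.adjoint Sm) (Wn y)))) = y := by
    have := ContinuousLinearMap.ext_iff.mp hG1 y
    simpa using this
  -- the tail operator
  set T : H →L[ℂ] H := Wn.comp (G.comp ((ContinuousLinearMap.adjoint Wn).comp
      (Sm.comp ((ContinuousLinearMap.adjoint Sm).comp
        (ContinuousLinearMap.id ℂ H - projFin v))))) with hT
  have hTf : T f = Wn (G ((ContinuousLinearMap.adjoint Wn)
      (Sm ((ContinuousLinearMap.adjoint Sm) (f - Pf))))) := by
    simp [hT, ContinuousLinearMap.comp_apply, ContinuousLinearMap.sub_apply, hPf]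
  -- f̃ = Pf + T f
  have hdecomp : ft = Pf + T f := by
    have hf : f = Wn y + (f - Pf) := by rw [hy]; abel
    rw [hft, hTf]
    conv_lhs => rw [hf]
    simp only [map_add]
    rw [hGy, hy]
  -- P (f - Pf) = 0, so T f = T (f - Pf)
  have hPidem : projFin v (f - Pf) = 0 := by
    have h1 : projFin v Pf = Pf := by
      rw [hPf, hPdef, hPdef]
      congr 1
      exact Submodule.orthogonalProjectionOnto_mem_subspace_eq_self (V.orthogonalProjectionOnto f)
    rw [map_sub, h1, hPf, sub_self]
  have hTsub : T f = T (f - Pf) := by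
    have h2 : T (f - Pf) = Wn (G ((ContinuousLinearMap.adjoint Wn)
        (Sm ((ContinuousLinearMap.adjoint Sm) ((f - Pf) - projFin v (f - Pf)))))) := by
      simp [hT, ContinuousLinearMap.comp_apply, ContinuousLinearMap.sub_apply]
    rw [hTf, h2, hPidem, sub_zero]
  calc ‖f - ft‖ = ‖(f - Pf) - T f‖ := by rw [hdecomp, sub_add_eq_sub_sub]
    _ ≤ ‖f - Pf‖ + ‖T f‖ := norm_sub_le _ _
    _ ≤ ‖f - Pf‖ + ‖T‖ * ‖f - Pf‖ := by
        rw [hTsub]; exact add_le_add_right (T.le_opNorm _) _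
    _ = (1 + ‖T‖) * ‖f - Pf‖ := by ring
end
end
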